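/- Let π be a partition of Fin n and let W ⊆ Fin n be a union of blocks of π; write π_W for the set of blocks of π contained in W and π_{W^c} for the set of blocks of π contained in the complement of W. Suppose R is a finite set of partitions of W and (a_ρ)_{ρ∈R} are rationals such that F_W[π_W, χ'] = Σ_{ρ∈R} a_ρ · F_W[ρ, χ'] for every partition χ' of W. Then for every partition χ of Fin n, F_n[π, χ] = Σ_{ρ∈R} a_ρ · F_n[ρ ∪ π_{W^c}, χ], where ρ ∪ π_{W^c} denotes the partition of Fin n whose blocks are the blocks of ρ together with the blocks of π_{W^c}. -/
import Mathlib


noncomputable section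

/-- The number of blocks of a partition of `β`, represented as a setoid. -/
def nBlocks {β : Type*} (s : Setoid β) : ℕ := Nat.card (Quotient s)

/-- Two partitions of a finite set are compatible if `|π| + |ρ| = m + |π ⊔ ρ|`,
where `m` is the size of the ground set. -/
def Compatible {β : Type*} (s t : Setoid β) : Prop :=
  nBlocks s + nBlocks t = Nat.card β + nBlocks (s ⊔ t)

open scoped Classical in
/-- The forest compatibility matrix `F_β`. -/
def FMat (β : Type*) : Matrix (Setoid β) (Setoid β) ℚ := fun s t =>
  if Compatible s t then 1 else 0

/-- The disjoint union of two partitions: the partition of `β ⊕ γ` whose blocks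
are the blocks of `s` together with the blocks of `t`. -/
def sumSetoid {β γ : Type*} (s : Setoid β) (t : Setoid γ) : Setoid (β ⊕ γ) where
  r x y :=
    match x, y with
    | .inl a, .inl b => s a b
    | .inr a, .inr b => t a b
    | _, _ => False
  iseqv := by
    constructor
    · rintro (a | a)
      · exact s.refl a
      · exact t.refl a
    · rintro (a | a) (b | b) h
      · exact s.symm h
      · exact h.elim
      · exact h.elim
      · exact t.symm h
    · rintro (a | a) (b | b) (c | c) h1 h2 <;>
        first
          | exact s.trans h1 h2
          | exact t.trans h1 h2
          | exact False.elim h1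
          | exact False.elim h2

/-- Given a partition `ρ` of `W ⊆ α` and a partition `σ` of `Wᶜ`, the partition
of `α` whose blocks are the blocks of `ρ` together with the blocks of `σ`. -/
noncomputable def combine {α : Type*} (W : Set α) (ρ : Setoid ↥W)
    (σ : Setoid ↥(Wᶜ : Set α)) : Setoid α := by
  classical
  exact Setoid.comap (Equiv.Set.sumCompl W).symm (sumSetoid ρ σ)


section Helpers

variable {α : Type*}

lemma setoid_eq_iff {s t : Setoid α} : s = t ↔ ∀ x y, s x y ↔ t x y :=
  ⟨fun h _ _ => h ▸ Iff.rfl, Setoid.ext⟩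

lemma nBlocks_bot [Finite α] : nBlocks (⊥ : Setoid α) = Nat.card α := by
  have h : (⊥ : Setoid α) = Setoid.ker id := by
    apply Setoid.ext; intro x y
    rw [Setoid.bot_def]
  rw [nBlocks, h]
  exact Nat.card_congr (Setoid.quotientKerEquivOfSurjective id Function.surjective_id)

lemma nBlocks_le_card [Finite α] (t : Setoid α) : nBlocks t ≤ Nat.card α :=
  Nat.card_le_card_of_surjective (Quotient.mk t) Quotient.mk_surjective

lemma eq_bot_of_trivial {t : Setoid α} (h : ∀ x y, t x y → x = y) : t = ⊥ := by
  apply le_antisymm _ bot_le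
  rw [Setoid.le_def]
  intro x y hxy
  rw [Setoid.bot_def]
  exact h x y hxy

/-- the setoid identifying `a` and `b` only -/
def pairSetoid (a b : α) : Setoid α where
  r x y := x = y ∨ (x = a ∧ y = b) ∨ (x = b ∧ y = a)
  iseqv := by
    constructor
    · intro x; exact Or.inl rfl
    · intro x y h; rcases h with h | ⟨h1, h2⟩ | ⟨h1, h2⟩
      · exact Or.inl h.symm
      · exact Or.inr (Or.inr ⟨h2, h1⟩)
      · exact Or.inr (Or.inl ⟨h2, h1⟩)
    · intro x y z h h'
      rcases h with h | ⟨h1, h2⟩ | ⟨h1, h2⟩ <;> rcases h' with h' | ⟨h1', h2'⟩ | ⟨h1', h2'⟩ <;>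
        subst_vars <;> tauto

lemma sup_pair_rel (s : Setoid α) (a b : α) (x y : α) :
    (s ⊔ pairSetoid a b) x y ↔ s x y ∨ (s x a ∧ s b y) ∨ (s x b ∧ s a y) := by
  have hJ : ∃ J : Setoid α, (∀ u v, J u v ↔ (s u v ∨ (s u a ∧ s b v) ∨ (s u b ∧ s a v))) := by
    refine ⟨⟨fun u v => s u v ∨ (s u a ∧ s b v) ∨ (s u b ∧ s a v), ?_, ?_, ?_⟩, fun _ _ => Iff.rfl⟩
    · intro u; exact Or.inl (s.iseqv.refl u)
    · rintro u v (h | ⟨h1, h2⟩ | ⟨h1, h2⟩)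
      · exact Or.inl (s.iseqv.symm h)
      · exact Or.inr (Or.inr ⟨s.iseqv.symm h2, s.iseqv.symm h1⟩)
      · exact Or.inr (Or.inl ⟨s.iseqv.symm h2, s.iseqv.symm h1⟩)
    · rintro u v w (h | ⟨h1, h2⟩ | ⟨h1, h2⟩) (h' | ⟨h1', h2'⟩ | ⟨h1', h2'⟩)
      · exact Or.inl (s.iseqv.trans h h')
      · exact Or.inr (Or.inl ⟨s.iseqv.trans h h1', h2'⟩)
      · exact Or.inr (Or.inr ⟨s.iseqv.trans h h1', h2'⟩)
      · exact Or.inr (Or.inl ⟨h1, s.iseqv.trans h2 h'⟩)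
      · exact Or.inl (s.iseqv.trans (s.iseqv.trans h1 (s.iseqv.symm (s.iseqv.trans h2 h1'))) h2')
      · exact Or.inl (s.iseqv.trans h1 h2')
      · exact Or.inr (Or.inr ⟨h1, s.iseqv.trans h2 h'⟩)
      · exact Or.inl (s.iseqv.trans h1 h2')
      · exact Or.inl (s.iseqv.trans (s.iseqv.trans h1 (s.iseqv.symm (s.iseqv.trans h2 h1'))) h2')
  obtain ⟨J, hJrel⟩ := hJ
  have hEq : s ⊔ pairSetoid a b = J := by
    apply le_antisymm
    · apply sup_le
      · rw [Setoid.le_def]; intro u v h; rw [hJrel]; exact Or.inl h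
      · rw [Setoid.le_def]; rintro u v (heq | ⟨ha, hb⟩ | ⟨ha, hb⟩)
        · exact heq ▸ J.refl u
        · subst ha; subst hb; rw [hJrel]; exact Or.inr (Or.inl ⟨s.iseqv.refl _, s.iseqv.refl _⟩)
        · subst ha; subst hb; rw [hJrel]; exact Or.inr (Or.inr ⟨s.iseqv.refl _, s.iseqv.refl _⟩)
    · rw [Setoid.le_def]
      intro u v h
      rw [hJrel] at h
      have hs : s ≤ s ⊔ pairSetoid a b := le_sup_left
      have hp : pairSetoid a b ≤ s ⊔ pairSetoid a b := le_sup_right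
      rw [Setoid.le_def] at hs hp
      rcases h with h | ⟨h1, h2⟩ | ⟨h1, h2⟩
      · exact hs h
      · exact Setoid.trans' _ (hs h1) (Setoid.trans' _ (hp (Or.inr (Or.inl ⟨rfl, rfl⟩))) (hs h2))
      · exact Setoid.trans' _ (hs h1) (Setoid.trans' _ (hp (Or.inr (Or.inr ⟨rfl, rfl⟩))) (hs h2))
  rw [hEq]; exact hJrel x y

lemma nBlocks_le_sup_pair [Finite α] (s : Setoid α) (a b : α) :
    nBlocks s ≤ nBlocks (s ⊔ pairSetoid a b) + 1 := by
  classical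
  set T := s ⊔ pairSetoid a b with hT
  have hle : s ≤ T := le_sup_left
  let g : Quotient s → Quotient T := Quotient.map id (fun u v h => Setoid.le_def.mp hle h)
  let h : Quotient s → Quotient T ⊕ Unit := fun c =>
    if c = Quotient.mk s a then Sum.inr () else Sum.inl (g c)
  have hinj : Function.Injective h := by
    intro c c' hcc
    induction c using Quotient.ind
    induction c' using Quotient.ind
    rename_i x x'
    simp only [h] at hcc
    by_cases h1 : (Quotient.mk s x) = Quotient.mk s a <;>
      by_cases h2 : (Quotient.mk s x') = Quotient.mk s a
    · rw [h1, h2]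
    · rw [if_pos h1, if_neg h2] at hcc; exact absurd hcc (by simp)
    · rw [if_neg h1, if_pos h2] at hcc; exact absurd hcc (by simp)
    · rw [if_neg h1, if_neg h2, Sum.inl.injEq] at hcc
      have hcc' : (Quotient.mk T x) = Quotient.mk T x' := by
        simpa [g, Quotient.map_mk] using hcc
      have hrel : T x x' := Quotient.eq.mp hcc'
      rcases (sup_pair_rel s a b x x').mp (hT ▸ hrel) with hr | ⟨hr1, hr2⟩ | ⟨hr1, hr2⟩
      · exact Quotient.sound hr
      · exact absurd (Quotient.sound hr1) h1
      · exact absurd (Quotient.sound (s.iseqv.symm hr2)) h2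
  calc nBlocks s ≤ Nat.card (Quotient T ⊕ Unit) := Nat.card_le_card_of_injective h hinj
    _ = nBlocks T + 1 := by rw [Nat.card_sum]; simp [nBlocks]

end Helpers
section Ineq

variable {α : Type*}

lemma split_setoid [Finite α] (t : Setoid α) {a b : α} (hne : a ≠ b) (hab : t a b) :
    ∃ t' : Setoid α, nBlocks t' = nBlocks t + 1 ∧ t' ⊔ pairSetoid a b = t := by
  classical
  let f : α → Quotient t ⊕ Unit := fun x => if x = a then Sum.inr () else Sum.inl (Quotient.mk t x)
  refine ⟨Setoid.ker f, ?_, ?_⟩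
  · have hsurj : Function.Surjective f := by
      rintro (c | u)
      · induction c using Quotient.ind
        rename_i x
        by_cases hxa : x = a
        · refine ⟨b, ?_⟩
          have : (Quotient.mk t b) = Quotient.mk t x := Quotient.sound (t.iseqv.symm (hxa ▸ hab))
          simp [f, if_neg (Ne.symm hne), this]
        · exact ⟨x, by simp [f, if_neg hxa]⟩
      · exact ⟨a, by simp [f]⟩
    rw [nBlocks, Nat.card_congr (Setoid.quotientKerEquivOfSurjective f hsurj), Nat.card_sum]
    simp [nBlocks]
  · apply le_antisymm
    · apply sup_le
      · rw [Setoid.le_def]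
        intro x y hxy
        have hxy : f x = f y := hxy
        by_cases hx : x = a <;> by_cases hy : y = a
        · subst hx; subst hy; exact t.iseqv.refl _
        · simp [f, if_pos hx, if_neg hy] at hxy
        · simp [f, if_neg hx, if_pos hy] at hxy
        · rw [show f x = Sum.inl (Quotient.mk t x) from if_neg hx,
            show f y = Sum.inl (Quotient.mk t y) from if_neg hy, Sum.inl.injEq] at hxy
          exact Quotient.exact hxy
      · rw [Setoid.le_def]
        rintro x y (heq | ⟨hxa, hyb⟩ | ⟨hxb, hya⟩)
        · exact heq ▸ t.iseqv.refl x
        · subst hxa; subst hyb; exact hab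
        · subst hxb; subst hya; exact t.iseqv.symm hab
    · rw [Setoid.le_def]
      intro x y hxy
      have h1 : Setoid.ker f ≤ Setoid.ker f ⊔ pairSetoid a b := le_sup_left
      have h2 : pairSetoid a b ≤ Setoid.ker f ⊔ pairSetoid a b := le_sup_right
      rw [Setoid.le_def] at h1 h2
      by_cases hx : x = a <;> by_cases hy : y = a
      · exact hx.trans hy.symm ▸ Setoid.refl' _ x
      · -- x = a, y ≠ a : a ~pair~ b ~ker~ y
        subst hx
        refine Setoid.trans' _ (h2 (Or.inr (Or.inl ⟨rfl, rfl⟩))) (h1 ?_)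
        show f b = f y
        rw [show f b = Sum.inl (Quotient.mk t b) from if_neg (Ne.symm hne),
          show f y = Sum.inl (Quotient.mk t y) from if_neg hy]
        exact congrArg _ (Quotient.sound (t.iseqv.trans (t.iseqv.symm hab) hxy))
      · subst hy
        refine Setoid.trans' _ (h1 ?_) (h2 (Or.inr (Or.inr ⟨rfl, rfl⟩)))
        show f x = f b
        rw [show f x = Sum.inl (Quotient.mk t x) from if_neg hx,
          show f b = Sum.inl (Quotient.mk t b) from if_neg (Ne.symm hne)]
        exact congrArg _ (Quotient.sound (t.iseqv.trans hxy hab))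
      · refine h1 ?_
        show f x = f y
        rw [show f x = Sum.inl (Quotient.mk t x) from if_neg hx,
          show f y = Sum.inl (Quotient.mk t y) from if_neg hy]
        exact congrArg _ (Quotient.sound hxy)

lemma eq_bot_of_nBlocks_eq_card [Finite α] {t : Setoid α} (h : nBlocks t = Nat.card α) :
    t = ⊥ := by
  have hsurj : Function.Surjective (Quotient.mk t) := Quotient.mk_surjective
  have hbij : Function.Bijective (Quotient.mk t) :=
    (Nat.bijective_iff_surjective_and_card _).mpr ⟨hsurj, h.symm⟩
  exact eq_bot_of_trivial fun x y hxy => hbij.injective (Quotient.sound hxy)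

/-- Subadditivity: `|s| + |t| ≤ n + |s ⊔ t|`. -/
theorem nBlocks_add_nBlocks_le [Finite α] (s t : Setoid α) :
    nBlocks s + nBlocks t ≤ Nat.card α + nBlocks (s ⊔ t) := by
  suffices h : ∀ (k : ℕ) (s t : Setoid α), Nat.card α - nBlocks t ≤ k →
      nBlocks s + nBlocks t ≤ Nat.card α + nBlocks (s ⊔ t) from h _ s t le_rfl
  intro k
  induction k with
  | zero =>
    intro s t hk
    have hle := nBlocks_le_card t
    have heq : nBlocks t = Nat.card α := by omega
    rw [eq_bot_of_nBlocks_eq_card heq, sup_bot_eq, nBlocks_bot]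
    omega
  | succ k ih =>
    intro s t hk
    by_cases hbot : t = ⊥
    · subst hbot
      rw [sup_bot_eq, nBlocks_bot]
      omega
    · have hnt : ∃ a b : α, a ≠ b ∧ t a b := by
        by_contra hcon
        push_neg at hcon
        exact hbot (eq_bot_of_trivial fun x y hxy => by
          by_contra hne; exact (hcon x y hne) hxy)
      obtain ⟨a, b, hne, hab⟩ := hnt
      obtain ⟨t', hcard, hsup⟩ := split_setoid t hne hab
      have h1 := nBlocks_le_sup_pair s a b
      have hmeas : Nat.card α - nBlocks t' ≤ k := by omega
      have h2 := ih (s ⊔ pairSetoid a b) t' hmeas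
      have hsup2 : (s ⊔ pairSetoid a b) ⊔ t' = s ⊔ t := by
        rw [sup_assoc, sup_comm (pairSetoid a b) t', hsup]
      rw [hsup2] at h2
      omega

end Ineq

section SumCombine

variable {α β γ : Type*}

lemma sumSetoid_inl_inl (s : Setoid β) (t : Setoid γ) (a b : β) :
    sumSetoid s t (Sum.inl a) (Sum.inl b) ↔ s a b := Iff.rfl

lemma sumSetoid_inr_inr (s : Setoid β) (t : Setoid γ) (a b : γ) :
    sumSetoid s t (Sum.inr a) (Sum.inr b) ↔ t a b := Iff.rfl

lemma sumSetoid_inl_inr (s : Setoid β) (t : Setoid γ) (a : β) (b : γ) :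
    ¬ sumSetoid s t (Sum.inl a) (Sum.inr b) := fun h => h

lemma sumSetoid_inr_inl (s : Setoid β) (t : Setoid γ) (a : γ) (b : β) :
    ¬ sumSetoid s t (Sum.inr a) (Sum.inl b) := fun h => h

lemma comap_mono {f : β → γ} {r s : Setoid γ} (h : r ≤ s) :
    Setoid.comap f r ≤ Setoid.comap f s := by
  rw [Setoid.le_def] at h ⊢
  intro x y hxy
  exact h hxy

lemma comap_symm_comap (g : β ≃ γ) (r : Setoid γ) :
    Setoid.comap (⇑g.symm) (Setoid.comap (⇑g) r) = r := by
  apply Setoid.ext; intro c d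
  simp [Setoid.comap_rel]

lemma comap_equiv_sup (g : β ≃ γ) (r s : Setoid γ) :
    Setoid.comap (⇑g) (r ⊔ s) = Setoid.comap (⇑g) r ⊔ Setoid.comap (⇑g) s := by
  apply le_antisymm
  · have h1 : r ⊔ s ≤ Setoid.comap (⇑g.symm) (Setoid.comap (⇑g) r ⊔ Setoid.comap (⇑g) s) := by
      apply sup_le
      · calc r = Setoid.comap (⇑g.symm) (Setoid.comap (⇑g) r) := (comap_symm_comap g r).symm
          _ ≤ _ := comap_mono le_sup_left
      · calc s = Setoid.comap (⇑g.symm) (Setoid.comap (⇑g) s) := (comap_symm_comap g s).symm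
          _ ≤ _ := comap_mono le_sup_right
    rw [Setoid.le_def] at h1 ⊢
    intro x y hxy
    have h2 := h1 (show (r ⊔ s) (g x) (g y) from hxy)
    have h3 : (Setoid.comap (⇑g) r ⊔ Setoid.comap (⇑g) s) (g.symm (g x)) (g.symm (g y)) := h2
    simpa using h3
  · exact sup_le (comap_mono le_sup_left) (comap_mono le_sup_right)

lemma nBlocks_comap_equiv (g : β ≃ γ) (r : Setoid γ) :
    nBlocks (Setoid.comap (⇑g) r) = nBlocks r :=
  Nat.card_congr (Quotient.congr g fun _ _ => Iff.rfl)

/-- `Quotient (sumSetoid s t) ≃ Quotient s ⊕ Quotient t`. -/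
noncomputable def sumQuotientEquiv (s : Setoid β) (t : Setoid γ) :
    Quotient (sumSetoid s t) ≃ Quotient s ⊕ Quotient t := by
  refine Equiv.ofBijective (Quotient.lift (fun x => match x with
    | .inl a => Sum.inl (Quotient.mk s a)
    | .inr b => Sum.inr (Quotient.mk t b)) ?_) ⟨?_, ?_⟩
  · rintro (a | a) (b | b) h
    · exact congrArg Sum.inl (Quotient.sound h)
    · exact h.elim
    · exact h.elim
    · exact congrArg Sum.inr (Quotient.sound h)
  · intro c c' hcc
    induction c using Quotient.ind
    induction c' using Quotient.ind
    rename_i x x'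
    rcases x with a | a <;> rcases x' with b | b
    · rw [Quotient.lift_mk, Quotient.lift_mk, Sum.inl.injEq] at hcc
      exact Quotient.sound (show s a b from Quotient.exact hcc)
    · rw [Quotient.lift_mk, Quotient.lift_mk] at hcc; exact absurd hcc (by simp)
    · rw [Quotient.lift_mk, Quotient.lift_mk] at hcc; exact absurd hcc (by simp)
    · rw [Quotient.lift_mk, Quotient.lift_mk, Sum.inr.injEq] at hcc
      exact Quotient.sound (show t a b from Quotient.exact hcc)
  · rintro (c | c)
    · induction c using Quotient.ind; rename_i a
      exact ⟨Quotient.mk _ (Sum.inl a), rfl⟩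
    · induction c using Quotient.ind; rename_i a
      exact ⟨Quotient.mk _ (Sum.inr a), rfl⟩

lemma nBlocks_sumSetoid [Finite β] [Finite γ] (s : Setoid β) (t : Setoid γ) :
    nBlocks (sumSetoid s t) = nBlocks s + nBlocks t := by
  rw [nBlocks, Nat.card_congr (sumQuotientEquiv s t), Nat.card_sum]
  rfl

lemma sumSetoid_sup (r r' : Setoid β) (s s' : Setoid γ) :
    sumSetoid (r ⊔ r') (s ⊔ s') = sumSetoid r s ⊔ sumSetoid r' s' := by
  apply le_antisymm
  · set S := sumSetoid r s ⊔ sumSetoid r' s' with hS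
    have hl : r ⊔ r' ≤ Setoid.comap Sum.inl S := by
      apply sup_le
      · rw [Setoid.le_def]; intro a b h
        exact Setoid.le_def.mp le_sup_left (show sumSetoid r s (.inl a) (.inl b) from h)
      · rw [Setoid.le_def]; intro a b h
        exact Setoid.le_def.mp le_sup_right (show sumSetoid r' s' (.inl a) (.inl b) from h)
    have hr : s ⊔ s' ≤ Setoid.comap Sum.inr S := by
      apply sup_le
      · rw [Setoid.le_def]; intro a b h
        exact Setoid.le_def.mp le_sup_left (show sumSetoid r s (.inr a) (.inr b) from h)
      · rw [Setoid.le_def]; intro a b h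
        exact Setoid.le_def.mp le_sup_right (show sumSetoid r' s' (.inr a) (.inr b) from h)
    rw [Setoid.le_def]
    rintro (a | a) (b | b) h
    · exact Setoid.le_def.mp hl h
    · exact h.elim
    · exact h.elim
    · exact Setoid.le_def.mp hr h
  · apply sup_le <;> rw [Setoid.le_def]
    · rintro (a | a) (b | b) h
      · exact Setoid.le_def.mp (le_sup_left : r ≤ r ⊔ r') h
      · exact h.elim
      · exact h.elim
      · exact Setoid.le_def.mp (le_sup_left : s ≤ s ⊔ s') h
    · rintro (a | a) (b | b) h
      · exact Setoid.le_def.mp (le_sup_right : r' ≤ r ⊔ r') h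
      · exact h.elim
      · exact h.elim
      · exact Setoid.le_def.mp (le_sup_right : s' ≤ s ⊔ s') h

variable (W : Set α)

lemma combine_rel_mem_mem {ρ : Setoid ↥W} {σ : Setoid ↥(Wᶜ : Set α)} {x y : α}
    (hx : x ∈ W) (hy : y ∈ W) :
    combine W ρ σ x y ↔ ρ ⟨x, hx⟩ ⟨y, hy⟩ := by
  classical
  unfold combine
  rw [Setoid.comap_rel, Equiv.Set.sumCompl_symm_apply_of_mem hx,
    Equiv.Set.sumCompl_symm_apply_of_mem hy]
  exact Iff.rfl

lemma combine_rel_not_not {ρ : Setoid ↥W} {σ : Setoid ↥(Wᶜ : Set α)} {x y : α}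
    (hx : x ∉ W) (hy : y ∉ W) :
    combine W ρ σ x y ↔ σ ⟨x, hx⟩ ⟨y, hy⟩ := by
  classical
  unfold combine
  rw [Setoid.comap_rel, Equiv.Set.sumCompl_symm_apply_of_notMem hx,
    Equiv.Set.sumCompl_symm_apply_of_notMem hy]
  exact Iff.rfl

lemma combine_rel_mem_not {ρ : Setoid ↥W} {σ : Setoid ↥(Wᶜ : Set α)} {x y : α}
    (hx : x ∈ W) (hy : y ∉ W) :
    ¬ combine W ρ σ x y := by
  classical
  unfold combine
  rw [Setoid.comap_rel, Equiv.Set.sumCompl_symm_apply_of_mem hx,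
    Equiv.Set.sumCompl_symm_apply_of_notMem hy]
  exact fun h => h

lemma combine_rel_notMem {ρ : Setoid ↥W} {σ : Setoid ↥(Wᶜ : Set α)} {x y : α}
    (hx : x ∉ W) (hy : y ∈ W) :
    ¬ combine W ρ σ x y := by
  classical
  unfold combine
  rw [Setoid.comap_rel, Equiv.Set.sumCompl_symm_apply_of_notMem hx,
    Equiv.Set.sumCompl_symm_apply_of_mem hy]
  exact fun h => h

lemma nBlocks_combine [Finite α] (ρ : Setoid ↥W) (σ : Setoid ↥(Wᶜ : Set α)) :
    nBlocks (combine W ρ σ) = nBlocks ρ + nBlocks σ := by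
  unfold combine
  rw [nBlocks_comap_equiv, nBlocks_sumSetoid]

lemma combine_sup (ρ ρ' : Setoid ↥W) (σ σ' : Setoid ↥(Wᶜ : Set α)) :
    combine W (ρ ⊔ ρ') (σ ⊔ σ') = combine W ρ σ ⊔ combine W ρ' σ' := by
  unfold combine
  rw [sumSetoid_sup, comap_equiv_sup]

lemma eq_combine_of_saturated (π : Setoid α)
    (hW : ∀ x ∈ W, ∀ y, π x y → y ∈ W) :
    π = combine W (Setoid.comap Subtype.val π) (Setoid.comap Subtype.val π) := by
  apply Setoid.ext; intro x y
  by_cases hx : x ∈ W <;> by_cases hy : y ∈ W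
  · rw [combine_rel_mem_mem W hx hy]; exact Iff.rfl
  · exact iff_of_false (fun h => hy (hW x hx y h)) (combine_rel_mem_not W hx hy)
  · exact iff_of_false (fun h => hx (hW y hy x (π.iseqv.symm h))) (combine_rel_notMem W hx hy)
  · rw [combine_rel_not_not W hx hy]; exact Iff.rfl

end SumCombine


section KeyCount

variable {α : Type*} [Finite α]

/-- The key exact counting identity: for `σ` a partition of `W` and `ψ` a partition of `α`,
with `θ` the trace of `ψ` on `W`,
`|ψ| + |σ ⊔ θ| = |ext σ ⊔ ψ| + |θ|` where `ext σ = combine W σ ⊥`. -/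
theorem key_count (W : Set α) (σ : Setoid ↥W) (ψ : Setoid α) :
    nBlocks ψ + nBlocks (σ ⊔ Setoid.comap (Subtype.val : ↥W → α) ψ)
      = nBlocks (combine W σ ⊥ ⊔ ψ) + nBlocks (Setoid.comap (Subtype.val : ↥W → α) ψ) := by
  classical
  set θ := Setoid.comap (Subtype.val : ↥W → α) ψ with hθ
  set E := combine W σ (⊥ : Setoid ↥(Wᶜ : Set α)) with hE
  -- the explicit description of `E ⊔ ψ`
  have hRex : ∃ R : Setoid α, ∀ x y, R x y ↔
      (ψ x y ∨ ∃ u v : ↥W, (σ ⊔ θ) u v ∧ ψ x ↑u ∧ ψ ↑v y) := by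
    refine ⟨⟨fun x y => ψ x y ∨ ∃ u v : ↥W, (σ ⊔ θ) u v ∧ ψ x ↑u ∧ ψ ↑v y, ?_, ?_, ?_⟩,
      fun _ _ => Iff.rfl⟩
    · intro x; exact Or.inl (ψ.iseqv.refl x)
    · rintro x y (h | ⟨u, v, h, hxu, hvy⟩)
      · exact Or.inl (ψ.iseqv.symm h)
      · exact Or.inr ⟨v, u, (σ ⊔ θ).iseqv.symm h, ψ.iseqv.symm hvy, ψ.iseqv.symm hxu⟩
    · rintro x y z (h | ⟨u, v, h, hxu, hvy⟩) (h' | ⟨u', v', h', hyu', hv'z⟩)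
      · exact Or.inl (ψ.iseqv.trans h h')
      · exact Or.inr ⟨u', v', h', ψ.iseqv.trans h hyu', hv'z⟩
      · exact Or.inr ⟨u, v, h, hxu, ψ.iseqv.trans hvy h'⟩
      · refine Or.inr ⟨u, v', ?_, hxu, hv'z⟩
        have hθvu' : θ v u' := ψ.iseqv.trans hvy hyu'
        exact (σ ⊔ θ).iseqv.trans h
          ((σ ⊔ θ).iseqv.trans (Setoid.le_def.mp le_sup_right hθvu') h')
  obtain ⟨R, hR⟩ := hRex
  have hψleR : ψ ≤ R := by
    rw [Setoid.le_def]; intro x y h; rw [hR]; exact Or.inl h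
  have hEψ : E ⊔ ψ = R := by
    apply le_antisymm
    · apply sup_le _ hψleR
      rw [Setoid.le_def]; intro x y h
      by_cases hx : x ∈ W <;> by_cases hy : y ∈ W
      · have hσ : σ ⟨x, hx⟩ ⟨y, hy⟩ := (combine_rel_mem_mem W hx hy).mp h
        rw [hR]
        exact Or.inr ⟨⟨x, hx⟩, ⟨y, hy⟩, Setoid.le_def.mp le_sup_left hσ,
          ψ.iseqv.refl x, ψ.iseqv.refl y⟩
      · exact absurd h (combine_rel_mem_not W hx hy)
      · exact absurd h (combine_rel_notMem W hx hy)
      · have hb : (⊥ : Setoid ↥(Wᶜ : Set α)) ⟨x, hx⟩ ⟨y, hy⟩ := (combine_rel_not_not W hx hy).mp h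
        have hb2 : (⟨x, hx⟩ : ↥(Wᶜ : Set α)) = ⟨y, hy⟩ := by
          rw [Setoid.bot_def] at hb; exact hb
        have hxy : x = y := congrArg Subtype.val hb2
        exact hxy ▸ R.iseqv.refl x
    · rw [Setoid.le_def]; intro x y h
      rw [hR] at h
      have hle1 : ψ ≤ E ⊔ ψ := le_sup_right
      have hle2 : σ ⊔ θ ≤ Setoid.comap (Subtype.val : ↥W → α) (E ⊔ ψ) := by
        apply sup_le
        · rw [Setoid.le_def]; intro u v huv
          exact Setoid.le_def.mp (le_sup_left : E ≤ E ⊔ ψ)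
            ((combine_rel_mem_mem W u.2 v.2).mpr huv)
        · rw [Setoid.le_def]; intro u v huv
          exact Setoid.le_def.mp (le_sup_right : ψ ≤ E ⊔ ψ) huv
      rcases h with h | ⟨u, v, h, hxu, hvy⟩
      · exact Setoid.le_def.mp hle1 h
      · exact (E ⊔ ψ).iseqv.trans (Setoid.le_def.mp hle1 hxu)
          ((E ⊔ ψ).iseqv.trans (Setoid.le_def.mp hle2 h) (Setoid.le_def.mp hle1 hvy))
  have hcomapR : Setoid.comap (Subtype.val : ↥W → α) R = σ ⊔ θ := by
    apply le_antisymm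
    · rw [Setoid.le_def]; intro u v h
      rw [Setoid.comap_rel, hR] at h
      rcases h with h | ⟨u', v', h', hxu', hv'y⟩
      · exact Setoid.le_def.mp le_sup_right (show θ u v from h)
      · have h1 : θ u u' := hxu'
        have h2 : θ v' v := hv'y
        exact (σ ⊔ θ).iseqv.trans (Setoid.le_def.mp le_sup_right h1)
          ((σ ⊔ θ).iseqv.trans h' (Setoid.le_def.mp le_sup_right h2))
    · apply sup_le
      · rw [Setoid.le_def]; intro u v h
        rw [Setoid.comap_rel, hR]
        exact Or.inr ⟨u, v, Setoid.le_def.mp le_sup_left h, ψ.iseqv.refl _, ψ.iseqv.refl _⟩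
      · rw [Setoid.le_def]; intro u v h
        rw [Setoid.comap_rel, hR]
        exact Or.inl h
  -- counting
  set A : Set (Quotient ψ) := Set.range ((Quotient.mk'' : α → Quotient ψ) ∘ Subtype.val) with hA
  set B : Set (Quotient R) := Set.range ((Quotient.mk'' : α → Quotient R) ∘ Subtype.val) with hB
  have hcardA : Nat.card ↥A = nBlocks θ :=
    (Nat.card_congr (Setoid.comapQuotientEquiv (Subtype.val : ↥W → α) ψ)).symm
  have hcardB : Nat.card ↥B = nBlocks (σ ⊔ θ) := by
    rw [← hcomapR]
    exact (Nat.card_congr (Setoid.comapQuotientEquiv (Subtype.val : ↥W → α) R)).symm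
  let Φ : Quotient ψ → Quotient R := Quotient.map' id (fun x y h => Setoid.le_def.mp hψleR h)
  have hΦmk : ∀ x : α, Φ (Quotient.mk'' x) = Quotient.mk'' x := fun x => rfl
  have hΦsurj : Function.Surjective Φ := by
    intro d
    induction d using Quotient.ind
    rename_i x
    exact ⟨Quotient.mk'' x, rfl⟩
  have hmem : ∀ c : Quotient ψ, Φ c ∈ B ↔ c ∈ A := by
    intro c
    induction c using Quotient.ind
    rename_i x
    constructor
    · rintro ⟨u, hu⟩
      have hu' : R ↑u x := Quotient.exact' (show Quotient.mk'' (u : α) = Quotient.mk'' x from hu)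
      rw [hR] at hu'
      rcases hu' with h | ⟨u', v', _, _, hv'x⟩
      · exact ⟨u, Quotient.sound' h⟩
      · exact ⟨v', Quotient.sound' hv'x⟩
    · rintro ⟨u, hu⟩
      refine ⟨u, ?_⟩
      have hu' : ψ ↑u x := Quotient.exact' (show Quotient.mk'' (u : α) = Quotient.mk'' x from hu)
      exact Quotient.sound' (Setoid.le_def.mp hψleR hu')
  have hinj : ∀ c c' : Quotient ψ, c ∉ A → Φ c = Φ c' → c = c' := by
    intro c c' hc hcc
    induction c using Quotient.ind
    induction c' using Quotient.ind
    rename_i x x'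
    have hrel : R x x' := Quotient.exact' (show Quotient.mk'' x = Quotient.mk'' x' from hcc)
    rw [hR] at hrel
    rcases hrel with h | ⟨u, v, _, hxu, _⟩
    · exact Quotient.sound' h
    · exact absurd ⟨u, Quotient.sound' (ψ.iseqv.symm hxu)⟩ hc
  -- the bijection between complements
  have hcompl : Nat.card ↥(Aᶜ) = Nat.card ↥(Bᶜ) := by
    refine Nat.card_congr (Equiv.ofBijective
      (fun c => ⟨Φ c.1, fun hb => c.2 ((hmem c.1).mp hb)⟩ : ↥(Aᶜ) → ↥(Bᶜ)) ⟨?_, ?_⟩)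
    · intro c c' h
      exact Subtype.ext (hinj c.1 c'.1 c.2 (congrArg Subtype.val h))
    · rintro ⟨d, hd⟩
      obtain ⟨c, rfl⟩ := hΦsurj d
      exact ⟨⟨c, fun ha => hd ((hmem c).mpr ha)⟩, rfl⟩
  have h1 : nBlocks ψ = nBlocks θ + Nat.card ↥(Aᶜ) := by
    rw [nBlocks, ← Nat.card_congr (Equiv.Set.sumCompl A), Nat.card_sum, hcardA]
  have h2 : nBlocks R = nBlocks (σ ⊔ θ) + Nat.card ↥(Bᶜ) := by
    rw [nBlocks, ← Nat.card_congr (Equiv.Set.sumCompl B), Nat.card_sum, hcardB]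
  rw [hEψ]
  omega

end KeyCount

/-- Projection lemma: let `π` be a partition of `Fin n` and `W` a union of
blocks of `π`; the restriction `π_W` of `π` to `W` and `π_{Wᶜ}` to `Wᶜ` are
given by `Setoid.comap Subtype.val π`.  If the row `F_W[π_W]` decomposes as
`Σ_{ρ ∈ R} a_ρ · F_W[ρ]`, then for every partition `χ` of `Fin n`,
`F_n[π, χ] = Σ_{ρ ∈ R} a_ρ · F_n[ρ ∪ π_{Wᶜ}, χ]`. -/
theorem partProj (n : ℕ) (π : Setoid (Fin n)) (W : Set (Fin n))
    (hW : ∀ x ∈ W, ∀ y, π x y → y ∈ W)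
    (R : Finset (Setoid ↥W)) (a : Setoid ↥W → ℚ)
    (h : ∀ χ' : Setoid ↥W,
      FMat ↥W (Setoid.comap Subtype.val π) χ' = ∑ ρ ∈ R, a ρ * FMat ↥W ρ χ') :
    ∀ χ : Setoid (Fin n),
      FMat (Fin n) π χ =
        ∑ ρ ∈ R, a ρ *
          FMat (Fin n)
            (combine W ρ (Setoid.comap Subtype.val π : Setoid ↥(Wᶜ : Set (Fin n)))) χ := by
  classical
  intro χ
  set πW : Setoid ↥W := Setoid.comap Subtype.val π with hπWdef
  set πc : Setoid ↥(Wᶜ : Set (Fin n)) := Setoid.comap Subtype.val π with hπcdef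
  set C : Setoid (Fin n) := combine W (⊥ : Setoid ↥W) πc with hCdef
  set ψ : Setoid (Fin n) := C ⊔ χ with hψdef
  set θ : Setoid ↥W := Setoid.comap (Subtype.val : ↥W → Fin n) ψ with hθdef
  have hcards : Nat.card ↥W + Nat.card ↥(Wᶜ : Set (Fin n)) = Nat.card (Fin n) := by
    rw [← Nat.card_sum]
    exact Nat.card_congr (Equiv.Set.sumCompl W)
  have hjoin : ∀ σ : Setoid ↥W, combine W σ πc ⊔ χ = combine W σ ⊥ ⊔ ψ := by
    intro σ
    have hstep : combine W σ πc = combine W σ ⊥ ⊔ C := by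
      rw [hCdef, ← combine_sup, sup_bot_eq, bot_sup_eq]
    rw [hstep, hψdef, sup_assoc]
  have hineq1 : nBlocks C + nBlocks χ ≤ Nat.card (Fin n) + nBlocks ψ := by
    rw [hψdef]; exact nBlocks_add_nBlocks_le _ _
  have hCcard : nBlocks C = Nat.card ↥W + nBlocks πc := by
    rw [hCdef, nBlocks_combine, nBlocks_bot]
  have key : ∀ σ : Setoid ↥W,
      Compatible (combine W σ πc) χ ↔ (Compatible C χ ∧ Compatible σ θ) := by
    intro σ
    have hid := key_count W σ ψ
    rw [← hθdef] at hid
    have hW2 : nBlocks σ + nBlocks θ ≤ Nat.card ↥W + nBlocks (σ ⊔ θ) :=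
      nBlocks_add_nBlocks_le _ _
    have hcomb : nBlocks (combine W σ πc) = nBlocks σ + nBlocks πc := nBlocks_combine W σ πc
    unfold Compatible
    rw [hjoin σ, hcomb, ← hψdef]
    omega
  have hπ : π = combine W πW πc := eq_combine_of_saturated W π hW
  have hFn : ∀ σ : Setoid ↥W,
      FMat (Fin n) (combine W σ πc) χ = (if Compatible C χ then (1 : ℚ) else 0) * FMat ↥W σ θ := by
    intro σ
    by_cases h1 : Compatible C χ <;> by_cases h2 : Compatible σ θ <;>
      simp [FMat, key σ, h1, h2]
  calc FMat (Fin n) π χ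
      = (if Compatible C χ then (1 : ℚ) else 0) * FMat ↥W πW θ := by rw [hπ]; exact hFn πW
    _ = (if Compatible C χ then (1 : ℚ) else 0) * ∑ ρ ∈ R, a ρ * FMat ↥W ρ θ := by rw [h θ]
    _ = ∑ ρ ∈ R, a ρ * ((if Compatible C χ then (1 : ℚ) else 0) * FMat ↥W ρ θ) := by
        rw [Finset.mul_sum]
        exact Finset.sum_congr rfl fun ρ _ => by ring
    _ = ∑ ρ ∈ R, a ρ * FMat (Fin n) (combine W ρ πc) χ :=
        Finset.sum_congr rfl fun ρ _ => by rw [hFn ρ]
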